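/- arXiv:1710.00412 — 2 statements merged into one kernel-verified Lean document; each statement's English description precedes it below -/
import Mathlib

section
/- The image of the ℤ-linear map Θ2 : ℤ[Γ²] → H_1(P_2), (γ1,γ2) ↦ class of (γ1,γ2)·∂T_2, is exactly the set of classes of closed transverse chains, i.e. the set of classes modulo N of elements of ℤ[P_2²]⁰ that lie in Σ_{j∈{0,1,2}, g∈Γ} φ_j^g(ℤ[ℙ¹(ℚ)²]). -/
open MvPolynomial

/-- `SL(2, ℤ)`. -/
abbrev SL2Z := Matrix.SpecialLinearGroup (Fin 2) ℤ

instance : Fact (Even (Fintype.card (Fin 2))) := ⟨by decide⟩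

/-- The subgroup `{±1}` of `SL(2,ℤ)`. -/
def pmOne : Subgroup SL2Z := Subgroup.zpowers (-1 : SL2Z)

instance pmOne_normal : pmOne.Normal := by
  constructor
  intro x hx g
  obtain ⟨k, rfl⟩ := Subgroup.mem_zpowers_iff.mp hx
  have hc : Commute g ((-1 : SL2Z) ^ k) := by
    refine Commute.zpow_right ?_ k
    unfold Commute SemiconjBy
    rw [mul_neg_one, neg_one_mul]
  rw [hc.eq, mul_assoc, mul_inv_cancel, mul_one]
  exact Subgroup.mem_zpowers_iff.mpr ⟨k, rfl⟩

/-- `Γ = PSL(2, ℤ) = SL(2,ℤ)/{±1}`. -/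
abbrev PSL2Z := SL2Z ⧸ pmOne

/-- `S = [[0,-1],[1,0]]` in `Γ`. -/
def pS : PSL2Z := QuotientGroup.mk ⟨!![0, -1; 1, 0], by norm_num [Matrix.det_fin_two_of]⟩

/-- `U = [[0,1],[-1,1]]` in `Γ`. -/
def pU : PSL2Z := QuotientGroup.mk ⟨!![0, 1; -1, 1], by norm_num [Matrix.det_fin_two_of]⟩

/-- `T = [[1,1],[0,1]]` in `Γ`. -/
def pT : PSL2Z := QuotientGroup.mk ⟨!![1, 1; 0, 1], by norm_num [Matrix.det_fin_two_of]⟩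

/-- The cusps `ℙ¹(ℚ) = ℚ ∪ {∞}`. -/
abbrev Cusp := OnePoint ℚ

/-- The Möbius action of `SL(2, ℤ)` on the cusps. -/
def mobiusSL (γ : SL2Z) : Cusp → Cusp := fun x =>
  match x with
  | OnePoint.infty =>
      if ((γ.1 1 0 : ℤ) : ℚ) = 0 then OnePoint.infty
      else OnePoint.some (((γ.1 0 0 : ℤ) : ℚ) / ((γ.1 1 0 : ℤ) : ℚ))
  | OnePoint.some r =>
      if ((γ.1 1 0 : ℤ) : ℚ) * r + ((γ.1 1 1 : ℤ) : ℚ) = 0 then OnePoint.infty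
      else OnePoint.some
        ((((γ.1 0 0 : ℤ) : ℚ) * r + ((γ.1 0 1 : ℤ) : ℚ)) /
          (((γ.1 1 0 : ℤ) : ℚ) * r + ((γ.1 1 1 : ℤ) : ℚ)))

lemma mobiusSL_neg (γ : SL2Z) : mobiusSL (-γ) = mobiusSL γ := by
  funext x
  cases x with
  | none =>
      simp only [mobiusSL, Matrix.SpecialLinearGroup.coe_neg, Matrix.neg_apply, Int.cast_neg,
        neg_eq_zero, neg_div_neg_eq]
  | some r =>
      simp only [mobiusSL, Matrix.SpecialLinearGroup.coe_neg, Matrix.neg_apply, Int.cast_neg,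
        neg_mul, ← neg_add, neg_eq_zero, neg_div_neg_eq]

/-- The Möbius action of `Γ = PSL(2, ℤ)` on the cusps. -/
def mobius (q : PSL2Z) : Cusp → Cusp :=
  Quotient.liftOn q mobiusSL (by
    intro a b h
    replace h : a⁻¹ * b ∈ pmOne := QuotientGroup.leftRel_apply.mp h
    obtain ⟨k, hk⟩ := Subgroup.mem_zpowers_iff.mp h
    have hb : b = a * (-1 : SL2Z) ^ k := by rw [hk, mul_inv_cancel_left]
    rcases Int.even_or_odd k with he | ho
    · rw [hb, he.neg_one_zpow, mul_one]
    · obtain ⟨m, rfl⟩ := ho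
      have h2 : ((-1 : SL2Z)) ^ (2 * m) = 1 := Even.neg_one_zpow ⟨m, by ring⟩
      rw [hb, zpow_add_one, h2, one_mul, mul_neg_one, mobiusSL_neg])

/-- The cusp `∞`. -/
def cInf : Cusp := OnePoint.infty

/-- The cusp `0`. -/
def cZero : Cusp := OnePoint.some 0

/-- Ordered pairs of cusps, the set `P_2 = ℙ¹(ℚ)²`. -/
abbrev P2 := Cusp × Cusp

/-- The boundary map `ℤ[ℙ¹(ℚ)²] → ℤ[ℙ¹(ℚ)]`, `[a,b] ↦ [b] - [a]`. -/
noncomputable def delta1 : FreeAbelianGroup (Cusp × Cusp) →+ FreeAbelianGroup Cusp :=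
  FreeAbelianGroup.lift fun p => FreeAbelianGroup.of p.2 - FreeAbelianGroup.of p.1

/-- The boundary map `ℤ[P_2²] → ℤ[P_2]`, `[x,y] ↦ [y] - [x]`. -/
noncomputable def delta2 : FreeAbelianGroup (P2 × P2) →+ FreeAbelianGroup P2 :=
  FreeAbelianGroup.lift fun p => FreeAbelianGroup.of p.2 - FreeAbelianGroup.of p.1

/-- The transverse maps `φ_j^g : ℤ[ℙ¹(ℚ)²] → ℤ[P_2²]` for `j = 0, 1, 2` :
`φ_0^g[a,b] = [(g∞,a),(g∞,b)]`, `φ_1^g[a,b] = [(a,ga),(b,gb)]`, `φ_2^g[a,b] = [(a,g0),(b,g0)]`. -/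
noncomputable def phi : Fin 3 → PSL2Z → (FreeAbelianGroup (Cusp × Cusp) →+ FreeAbelianGroup (P2 × P2)) :=
  ![fun g => FreeAbelianGroup.lift fun ab =>
      FreeAbelianGroup.of (((mobius g cInf, ab.1), (mobius g cInf, ab.2)) : P2 × P2),
    fun g => FreeAbelianGroup.lift fun ab =>
      FreeAbelianGroup.of (((ab.1, mobius g ab.1), (ab.2, mobius g ab.2)) : P2 × P2),
    fun g => FreeAbelianGroup.lift fun ab =>
      FreeAbelianGroup.of (((ab.1, mobius g cZero), (ab.2, mobius g cZero)) : P2 × P2)]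

/-- The subgroup `N = Σ_{j,g} φ_j^g(ℤ[ℙ¹(ℚ)²]⁰)` by which one quotients. -/
noncomputable def Nsub : AddSubgroup (FreeAbelianGroup (P2 × P2)) :=
  ⨆ (j : Fin 3) (g : PSL2Z), AddSubgroup.map (phi j g) (AddMonoidHom.ker delta1)

/-- `ℤ[P_2²]⁰`, the closed chains. -/
noncomputable def Ksub : AddSubgroup (FreeAbelianGroup (P2 × P2)) := AddMonoidHom.ker delta2

/-- `H_1(P_2) = ℤ[P_2²]⁰ / N`. -/
abbrev H1P2 := Ksub ⧸ (Nsub.addSubgroupOf Ksub)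

/-- The diagonal action of `(γ1,γ2) ∈ Γ²` on `P_2`. -/
def act2pt (γ : PSL2Z × PSL2Z) (p : P2) : P2 := (mobius γ.1 p.1, mobius γ.2 p.2)

/-- `(γ1,γ2)·∂T_2`, where `∂T_2 = [(0,∞),(0,0)] - [(∞,∞),(0,0)] + [(∞,∞),(0,∞)]`. -/
noncomputable def bT2 (γ : PSL2Z × PSL2Z) : FreeAbelianGroup (P2 × P2) :=
  FreeAbelianGroup.of ((act2pt γ (cZero, cInf), act2pt γ (cZero, cZero)) : P2 × P2) -
    FreeAbelianGroup.of ((act2pt γ (cInf, cInf), act2pt γ (cZero, cZero)) : P2 × P2) +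
    FreeAbelianGroup.of ((act2pt γ (cInf, cInf), act2pt γ (cZero, cInf)) : P2 × P2)

/-- The `ℤ`-linear extension of `(γ1,γ2) ↦ (γ1,γ2)·∂T_2` to `ℤ[Γ²]`. -/
noncomputable def actT2 (g : MonoidAlgebra ℤ (PSL2Z × PSL2Z)) : FreeAbelianGroup (P2 × P2) :=
  Finsupp.sum g.coeff fun γ n => n • bT2 γ

lemma delta2_bT2 (γ : PSL2Z × PSL2Z) : delta2 (bT2 γ) = 0 := by
  simp only [bT2, delta2, map_add, map_sub, FreeAbelianGroup.lift_apply_of]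
  abel

lemma actT2_mem_Ksub (g : MonoidAlgebra ℤ (PSL2Z × PSL2Z)) : actT2 g ∈ Ksub := by
  rw [Ksub, AddMonoidHom.mem_ker, actT2, map_finsuppSum]
  rw [Finsupp.sum]
  apply Finset.sum_eq_zero
  intro γ _
  rw [map_zsmul, delta2_bT2, smul_zero]

/-- The map `Θ2 : ℤ[Γ²] → H_1(P_2)`, sending `(γ1,γ2)` to the class of `(γ1,γ2)·∂T_2`. -/
noncomputable def Theta2 (g : MonoidAlgebra ℤ (PSL2Z × PSL2Z)) : H1P2 :=
  QuotientAddGroup.mk (⟨actT2 g, actT2_mem_Ksub g⟩ : Ksub)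

/-- `Σ_{j,g} φ_j^g(ℤ[ℙ¹(ℚ)²])`, the transverse chains. -/
noncomputable def Tsub : AddSubgroup (FreeAbelianGroup (P2 × P2)) :=
  ⨆ (j : Fin 3) (g : PSL2Z), (phi j g).range

/-- Representing vectors for cusps. -/
def toCusp (v : ℚ × ℚ) : Cusp := if v.2 = 0 then OnePoint.infty else OnePoint.some (v.1 / v.2)

def smul2 (γ : SL2Z) (v : ℚ × ℚ) : ℚ × ℚ :=
  ((γ.1 0 0 : ℤ) * v.1 + (γ.1 0 1 : ℤ) * v.2, (γ.1 1 0 : ℤ) * v.1 + (γ.1 1 1 : ℤ) * v.2)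

lemma det_rel (g : SL2Z) : (g.1 0 0 : ℚ) * (g.1 1 1 : ℚ) - (g.1 0 1 : ℚ) * (g.1 1 0 : ℚ) = 1 := by
  have h := g.2
  rw [Matrix.det_fin_two] at h
  have h2 : ((g.1 0 0 * g.1 1 1 - g.1 0 1 * g.1 1 0 : ℤ) : ℚ) = ((1:ℤ):ℚ) := by rw [h]
  push_cast at h2
  linarith

lemma smul2_mul (g h : SL2Z) (v : ℚ × ℚ) : smul2 (g*h) v = smul2 g (smul2 h v) := by
  have e : ∀ i j : Fin 2, (g*h).1 i j = g.1 i 0 * h.1 0 j + g.1 i 1 * h.1 1 j := by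
    intro i j
    rw [Matrix.SpecialLinearGroup.coe_mul, Matrix.mul_apply, Fin.sum_univ_two]
  simp only [smul2, e, Prod.mk.injEq]
  constructor <;> push_cast <;> ring

lemma smul2_ne_zero (g : SL2Z) {v : ℚ × ℚ} (hv : v ≠ 0) : smul2 g v ≠ 0 := by
  intro h
  have h1 : (g.1 0 0 : ℚ) * v.1 + (g.1 0 1 : ℚ) * v.2 = 0 := congrArg Prod.fst h
  have h2 : (g.1 1 0 : ℚ) * v.1 + (g.1 1 1 : ℚ) * v.2 = 0 := congrArg Prod.snd h
  have hd := det_rel g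
  apply hv
  have hv1 : v.1 = 0 := by
    linear_combination (g.1 1 1 : ℚ) * h1 - (g.1 0 1 : ℚ) * h2 - v.1 * hd
  have hv2 : v.2 = 0 := by
    linear_combination -(g.1 1 0 : ℚ) * h1 + (g.1 0 0 : ℚ) * h2 - v.2 * hd
  exact Prod.ext hv1 hv2

lemma mobiusSL_infty (g : SL2Z) : mobiusSL g OnePoint.infty =
    if ((g.1 1 0 : ℤ) : ℚ) = 0 then OnePoint.infty
    else OnePoint.some (((g.1 0 0 : ℤ) : ℚ) / ((g.1 1 0 : ℤ) : ℚ)) := rfl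

lemma mobiusSL_some (g : SL2Z) (r : ℚ) : mobiusSL g (OnePoint.some r) =
    if ((g.1 1 0 : ℤ) : ℚ) * r + ((g.1 1 1 : ℤ) : ℚ) = 0 then OnePoint.infty
    else OnePoint.some
      ((((g.1 0 0 : ℤ) : ℚ) * r + ((g.1 0 1 : ℤ) : ℚ)) /
        (((g.1 1 0 : ℤ) : ℚ) * r + ((g.1 1 1 : ℤ) : ℚ))) := rfl

lemma mobiusSL_toCusp (g : SL2Z) {v : ℚ × ℚ} (hv : v ≠ 0) :
    mobiusSL g (toCusp v) = toCusp (smul2 g v) := by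
  rcases eq_or_ne v.2 0 with h2 | h2
  · have h1 : v.1 ≠ 0 := by
      intro h1; exact hv (Prod.ext h1 h2)
    have htc : toCusp v = OnePoint.infty := if_pos h2
    rw [htc, mobiusSL_infty]
    simp only [toCusp, smul2, h2, mul_zero, add_zero]
    rcases eq_or_ne ((g.1 1 0 : ℚ)) 0 with hc | hc
    · rw [if_pos hc, if_pos (by rw [hc, zero_mul])]
    · have hne : (g.1 1 0 : ℚ) * v.1 ≠ 0 := mul_ne_zero hc h1
      rw [if_neg hc, if_neg hne]
      rw [mul_div_mul_right _ _ h1]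
  · have htc : toCusp v = OnePoint.some (v.1 / v.2) := if_neg h2
    rw [htc, mobiusSL_some]
    simp only [toCusp, smul2]
    have key : (g.1 1 0 : ℚ) * (v.1 / v.2) + (g.1 1 1 : ℚ) =
        ((g.1 1 0 : ℚ) * v.1 + (g.1 1 1 : ℚ) * v.2) / v.2 := by
      field_simp
    rcases eq_or_ne ((g.1 1 0 : ℚ) * v.1 + (g.1 1 1 : ℚ) * v.2) 0 with hden | hden
    · erw [if_pos, if_pos hden]
      rw [key, hden, zero_div]
    · erw [if_neg, if_neg hden]
      · congr 1
        rw [key]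
        field_simp
      · rw [key]
        exact div_ne_zero hden h2

lemma toCusp_surj (x : Cusp) : ∃ v : ℚ × ℚ, v ≠ 0 ∧ toCusp v = x := by
  cases x with
  | none => exact ⟨(1,0), by simp [Prod.ext_iff], by simp [toCusp, OnePoint.infty]; rfl⟩
  | some r => exact ⟨(r,1), by simp [toCusp]; rfl⟩

lemma mobiusSL_mul (g h : SL2Z) (x : Cusp) :
    mobiusSL (g * h) x = mobiusSL g (mobiusSL h x) := by
  obtain ⟨v, hv, rfl⟩ := toCusp_surj x
  rw [mobiusSL_toCusp _ hv, smul2_mul, mobiusSL_toCusp _ hv, mobiusSL_toCusp _ (smul2_ne_zero h hv)]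

lemma mobiusSL_one (x : Cusp) : mobiusSL 1 x = x := by
  obtain ⟨v, hv, rfl⟩ := toCusp_surj x
  rw [mobiusSL_toCusp _ hv]
  congr 1
  have e : ∀ i j : Fin 2, (1 : SL2Z).1 i j = if i = j then 1 else 0 := by
    intro i j
    rw [Matrix.SpecialLinearGroup.coe_one, Matrix.one_apply]
  simp [smul2, e]

lemma mobius_mk (M : SL2Z) (x : Cusp) : mobius (QuotientGroup.mk M) x = mobiusSL M x := rfl

lemma mobius_mul (g h : PSL2Z) (x : Cusp) : mobius (g * h) x = mobius g (mobius h x) := by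
  induction g using QuotientGroup.induction_on with
  | H g =>
  induction h using QuotientGroup.induction_on with
  | H h =>
  rw [← QuotientGroup.mk_mul, mobius_mk, mobius_mk, mobius_mk, mobiusSL_mul]

lemma mobius_one (x : Cusp) : mobius 1 x = x := mobiusSL_one x

lemma mobius_inv_cancel (g h : PSL2Z) (x : Cusp) : mobius (g * h⁻¹) (mobius h x) = mobius g x := by
  rw [← mobius_mul, inv_mul_cancel_right]
lemma entry00 (a b c d : ℤ) (h : Matrix.det !![a,b;c,d] = 1) :
    ((⟨!![a,b;c,d], h⟩ : SL2Z) : Matrix (Fin 2) (Fin 2) ℤ) 0 0 = a := rfl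
lemma entry01 (a b c d : ℤ) (h : Matrix.det !![a,b;c,d] = 1) :
    ((⟨!![a,b;c,d], h⟩ : SL2Z) : Matrix (Fin 2) (Fin 2) ℤ) 0 1 = b := rfl
lemma entry10 (a b c d : ℤ) (h : Matrix.det !![a,b;c,d] = 1) :
    ((⟨!![a,b;c,d], h⟩ : SL2Z) : Matrix (Fin 2) (Fin 2) ℤ) 1 0 = c := rfl
lemma entry11 (a b c d : ℤ) (h : Matrix.det !![a,b;c,d] = 1) :
    ((⟨!![a,b;c,d], h⟩ : SL2Z) : Matrix (Fin 2) (Fin 2) ℤ) 1 1 = d := rfl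

lemma mobius_pS_inf : mobius pS cInf = cZero := by
  rw [pS]; erw [mobius_mk]
  erw [show cInf = OnePoint.infty from rfl, mobiusSL_infty]
  rw [entry10, entry00]
  norm_num
  rfl

lemma mobius_pS_zero : mobius pS cZero = cInf := by
  rw [pS]; erw [mobius_mk]
  erw [show cZero = OnePoint.some 0 from rfl, mobiusSL_some]
  rw [entry10, entry11]
  norm_num
  rfl
lemma exists_mobius_inf (x : Cusp) : ∃ γ : PSL2Z, mobius γ cInf = x := by
  cases x with
  | none => exact ⟨1, mobius_one cInf⟩
  | some r =>
      have hcop : IsCoprime (r.num) (r.den : ℤ) :=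
        Int.isCoprime_iff_gcd_eq_one.mpr (by simpa [Int.gcd] using r.reduced)
      obtain ⟨u, v, huv⟩ := hcop
      have hdet : Matrix.det !![r.num, -v; (r.den : ℤ), u] = 1 := by
        rw [Matrix.det_fin_two_of]
        linear_combination huv
      refine ⟨QuotientGroup.mk ⟨!![r.num, -v; (r.den : ℤ), u], hdet⟩, ?_⟩
      erw [mobius_mk, show cInf = OnePoint.infty from rfl, mobiusSL_infty, entry10, entry00]
      have hden : ((r.den : ℤ) : ℚ) ≠ 0 := by exact_mod_cast r.den_ne_zero
      rw [if_neg hden]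
      show OnePoint.some _ = OnePoint.some r
      congr 1
      push_cast
      exact Rat.num_div_den r

lemma exists_mobius_zero (y : Cusp) : ∃ γ : PSL2Z, mobius γ cZero = y := by
  obtain ⟨γ, hγ⟩ := exists_mobius_inf y
  exact ⟨γ * pS, by rw [mobius_mul, mobius_pS_zero, hγ]⟩

/-- Manin's continued fraction trick, in "constancy" form. -/
lemma manin_const {α : Sort*} (h : Cusp → α)
    (H : ∀ γ : PSL2Z, h (mobius γ cZero) = h (mobius γ cInf)) (x : Cusp) : h x = h cInf := by
  have main : ∀ n : ℕ, ∀ r : ℚ, r.den ≤ n → h (OnePoint.some r) = h cInf := by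
    intro n
    induction n with
    | zero => intro r hr; exact absurd (lt_of_lt_of_le r.pos hr) (lt_irrefl 0)
    | succ n ih =>
      intro r hr
      rcases eq_or_lt_of_le (Nat.succ_le_of_lt r.pos) with h1 | h1
      · -- r.den = 1, r is an integer
        have hden1 : r.den = 1 := h1.symm
        have hdet : Matrix.det !![r.num, -1; 1, 0] = 1 := by
          rw [Matrix.det_fin_two_of]; ring
        set γ : PSL2Z := QuotientGroup.mk ⟨!![r.num, -1; 1, 0], hdet⟩ with hγdef
        have h0 : mobius γ cZero = cInf := by
          erw [hγdef, mobius_mk, show cZero = OnePoint.some 0 from rfl, mobiusSL_some,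
            entry10, entry11]
          norm_num
          rfl
        have hi : mobius γ cInf = OnePoint.some r := by
          erw [hγdef, mobius_mk, show cInf = OnePoint.infty from rfl, mobiusSL_infty,
            entry10, entry00]
          rw [if_neg (by norm_num)]
          congr 1
          conv_rhs => rw [← Rat.num_div_den r, hden1]
          norm_num
        rw [← hi, ← H γ, h0]
      · -- r.den ≥ 2
        set q : ℤ := (r.den : ℤ) with hq
        have hq2 : (2:ℤ) ≤ q := by rw [hq]; exact_mod_cast h1
        have hq0 : (0:ℤ) < q := by linarith
        have hcop : IsCoprime (r.num) q :=
          Int.isCoprime_iff_gcd_eq_one.mpr (by simpa [hq, Int.gcd] using r.reduced)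
        obtain ⟨u, v, huv⟩ := hcop
        -- u * r.num + v * q = 1
        set s : ℤ := u % q with hs
        have hs0 : 0 ≤ s := Int.emod_nonneg u (by linarith)
        have hsq : s < q := Int.emod_lt_of_pos u hq0
        have hmod : (q : ℤ) ∣ r.num * s - 1 := by
          have h3 : (q:ℤ) ∣ s - u := ⟨-(u / q), by rw [hs, Int.emod_def]; ring⟩
          have h4 : (q:ℤ) ∣ r.num * u - 1 := ⟨-v, by linear_combination huv⟩
          have h5 : (q:ℤ) ∣ r.num * (s - u) + (r.num * u - 1) := dvd_add (h3.mul_left _) h4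
          have e : r.num * (s - u) + (r.num * u - 1) = r.num * s - 1 := by ring
          rwa [e] at h5
        have hsne : s ≠ 0 := by
          intro h0
          rw [h0, mul_zero, zero_sub] at hmod
          have h6 : (q:ℤ) ∣ 1 := (dvd_neg.mp hmod)
          have := Int.le_of_dvd one_pos h6
          linarith
        have hspos : 0 < s := lt_of_le_of_ne hs0 (Ne.symm hsne)
        obtain ⟨t, ht⟩ := hmod
        have hdet : Matrix.det !![r.num, t; q, s] = 1 := by
          rw [Matrix.det_fin_two_of]
          linear_combination ht
        set γ : PSL2Z := QuotientGroup.mk ⟨!![r.num, t; q, s], hdet⟩ with hγdef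
        have hi : mobius γ cInf = OnePoint.some r := by
          erw [hγdef, mobius_mk, show cInf = OnePoint.infty from rfl, mobiusSL_infty,
            entry10, entry00]
          rw [if_neg (by exact_mod_cast hq0.ne')]
          congr 1
          rw [hq]
          push_cast
          exact Rat.num_div_den r
        have h0 : mobius γ cZero = OnePoint.some ((t : ℚ) / (s : ℚ)) := by
          erw [hγdef, mobius_mk, show cZero = OnePoint.some 0 from rfl, mobiusSL_some,
            entry10, entry11, entry00, entry01]
          rw [mul_zero, zero_add, if_neg (by exact_mod_cast hsne)]
          rw [mul_zero, zero_add]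
        have hd2 : ((t : ℚ) / (s : ℚ)).den ≤ n := by
          have hdvd : (((t : ℚ) / (s : ℚ)).den : ℤ) ∣ s := by
            rw [← Rat.divInt_eq_div]
            exact Rat.den_dvd t s
          have hle := Int.le_of_dvd hspos hdvd
          have hlt : (((t : ℚ) / (s : ℚ)).den : ℤ) < q := lt_of_le_of_lt hle hsq
          have hq_le : q ≤ (n:ℤ) + 1 := by rw [hq]; exact_mod_cast hr
          omega
        rw [← hi, ← H γ, h0, ih _ hd2]
  cases x with
  | none => rfl
  | some r => exact main r.den r le_rfl
open FreeAbelianGroup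

lemma phi0_of (g : PSL2Z) (a b : Cusp) : phi 0 g (of (a,b)) =
    of (((mobius g cInf, a), (mobius g cInf, b)) : P2 × P2) := by
  simp only [phi, Matrix.cons_val_zero]
  exact lift_apply_of _ _

lemma phi1_of (g : PSL2Z) (a b : Cusp) : phi 1 g (of (a,b)) =
    of (((a, mobius g a), (b, mobius g b)) : P2 × P2) := by
  simp only [phi, Matrix.cons_val_one, Matrix.head_cons]
  exact lift_apply_of _ _

lemma phi2_of (g : PSL2Z) (a b : Cusp) : phi 2 g (of (a,b)) =
    of (((a, mobius g cZero), (b, mobius g cZero)) : P2 × P2) := by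
  simp only [phi, Matrix.cons_val_two, Matrix.tail_cons, Matrix.head_cons]
  exact lift_apply_of _ _

lemma delta1_of (a b : Cusp) : delta1 (of (a,b)) = of b - of a := lift_apply_of _ _
lemma delta2_of (x y : P2) : delta2 (of (x,y)) = of y - of x := lift_apply_of _ _

lemma delta2_phi (j : Fin 3) (g : PSL2Z) {u : FreeAbelianGroup (Cusp × Cusp)}
    (hu : delta1 u = 0) : delta2 (phi j g u) = 0 := by
  have key : ∀ (e : Cusp → P2), (∀ a b : Cusp, phi j g (of (a,b)) = of ((e a, e b) : P2 × P2)) →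
      delta2 (phi j g u) = 0 := by
    intro e he
    have : ∀ w, delta2 (phi j g w) = FreeAbelianGroup.map e (delta1 w) := by
      intro w
      induction w using FreeAbelianGroup.induction_on with
      | zero => simp
      | of x =>
          obtain ⟨a, b⟩ := x
          rw [he a b, delta2_of, delta1_of, map_sub]
          rfl
      | neg x hx =>
          simp only [map_neg]
          rw [hx]
      | add x y hx hy =>
          simp only [map_add]
          rw [hx, hy]
    rw [this, hu, map_zero]
  fin_cases j
  · exact key (fun a => (mobius g cInf, a)) (fun a b => phi0_of g a b)
  · exact key (fun a => (a, mobius g a)) (fun a b => phi1_of g a b)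
  · exact key (fun a => (a, mobius g cZero)) (fun a b => phi2_of g a b)

lemma phi_mem_Nsub (j : Fin 3) (g : PSL2Z) {u : FreeAbelianGroup (Cusp × Cusp)}
    (hu : delta1 u = 0) : phi j g u ∈ Nsub := by
  have h1 : phi j g u ∈ AddSubgroup.map (phi j g) (AddMonoidHom.ker delta1) :=
    ⟨u, hu, rfl⟩
  exact le_iSup (fun j => ⨆ g, AddSubgroup.map (phi j g) (AddMonoidHom.ker delta1)) j
    (le_iSup (fun g => AddSubgroup.map (phi j g) (AddMonoidHom.ker delta1)) g h1)

lemma phi_mem_Tsub (j : Fin 3) (g : PSL2Z) (u : FreeAbelianGroup (Cusp × Cusp)) :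
    phi j g u ∈ Tsub := by
  exact le_iSup (fun j => ⨆ g, (phi j g).range) j
    (le_iSup (fun g => (phi j g).range) g ⟨u, rfl⟩)

lemma Nsub_le_Ksub : Nsub ≤ Ksub := by
  refine iSup_le fun j => iSup_le fun g => ?_
  rintro x ⟨u, hu, rfl⟩
  exact delta2_phi j g hu

/-- The subgroup generated by the `(γ1,γ2)·∂T_2`. -/
noncomputable def Bsub : AddSubgroup (FreeAbelianGroup (P2 × P2)) :=
  AddSubgroup.closure (Set.range bT2)

/-- `N` together with the boundaries of translates of `T_2`. -/
noncomputable def Qsub : AddSubgroup (FreeAbelianGroup (P2 × P2)) := Bsub ⊔ Nsub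

/-- Projection modulo `Qsub`. -/
noncomputable def piQ : FreeAbelianGroup (P2 × P2) →+ FreeAbelianGroup (P2 × P2) ⧸ Qsub :=
  QuotientAddGroup.mk' Qsub

lemma piQ_eq_zero {x : FreeAbelianGroup (P2 × P2)} (h : x ∈ Qsub) : piQ x = 0 :=
  (QuotientAddGroup.eq_zero_iff x).mpr h

lemma piQ_phi_zero (j : Fin 3) (g : PSL2Z) {u : FreeAbelianGroup (Cusp × Cusp)}
    (hu : delta1 u = 0) : piQ (phi j g u) = 0 :=
  piQ_eq_zero (le_sup_right (α := AddSubgroup _) (phi_mem_Nsub j g hu))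

lemma piQ_bT2 (γ : PSL2Z × PSL2Z) : piQ (bT2 γ) = 0 :=
  piQ_eq_zero (le_sup_left (α := AddSubgroup _)
    (AddSubgroup.subset_closure (Set.mem_range_self γ)))

lemma piQ_phi_congr (j : Fin 3) (g : PSL2Z) {u u' : FreeAbelianGroup (Cusp × Cusp)}
    (h : delta1 u = delta1 u') : piQ (phi j g u) = piQ (phi j g u') := by
  have h0 : delta1 (u - u') = 0 := by rw [map_sub, h, sub_self]
  have := piQ_phi_zero j g h0
  rw [map_sub, map_sub, sub_eq_zero] at this
  exact this
/-- Vertical basepointed chains. -/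
noncomputable def vb (p : P2) : FreeAbelianGroup (P2 × P2) ⧸ Qsub :=
  piQ (of ((((p.1, cInf) : P2), p) : P2 × P2))

/-- Horizontal basepointed chains. -/
noncomputable def hb (p : P2) : FreeAbelianGroup (P2 × P2) ⧸ Qsub :=
  piQ (of ((((cInf, p.2) : P2), p) : P2 × P2))

lemma vert_eval (x a b : Cusp) :
    piQ (of ((((x, a) : P2), ((x, b) : P2)) : P2 × P2)) = vb (x, b) - vb (x, a) := by
  obtain ⟨g, hg⟩ := exists_mobius_inf x
  have h1 : (of ((((x, a) : P2), ((x, b) : P2)) : P2 × P2)) = phi 0 g (of (a, b)) := by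
    rw [phi0_of, hg]
  have h2 : (of ((((x, cInf) : P2), ((x, b) : P2)) : P2 × P2)) = phi 0 g (of (cInf, b)) := by
    rw [phi0_of, hg]
  have h3 : (of ((((x, cInf) : P2), ((x, a) : P2)) : P2 × P2)) = phi 0 g (of (cInf, a)) := by
    rw [phi0_of, hg]
  show piQ _ = piQ _ - piQ _
  rw [h1, h2, h3, ← map_sub, piQ_phi_congr 0 g (u' := of (cInf, b) - of (cInf, a)) ?_]
  · rw [map_sub]
  · rw [map_sub, delta1_of, delta1_of, delta1_of]
    abel

lemma horiz_eval (y a b : Cusp) :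
    piQ (of ((((a, y) : P2), ((b, y) : P2)) : P2 × P2)) = hb (b, y) - hb (a, y) := by
  obtain ⟨g, hg⟩ := exists_mobius_zero y
  have h1 : (of ((((a, y) : P2), ((b, y) : P2)) : P2 × P2)) = phi 2 g (of (a, b)) := by
    rw [phi2_of, hg]
  have h2 : (of ((((cInf, y) : P2), ((b, y) : P2)) : P2 × P2)) = phi 2 g (of (cInf, b)) := by
    rw [phi2_of, hg]
  have h3 : (of ((((cInf, y) : P2), ((a, y) : P2)) : P2 × P2)) = phi 2 g (of (cInf, a)) := by
    rw [phi2_of, hg]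
  show piQ _ = piQ _ - piQ _
  rw [h1, h2, h3, ← map_sub, piQ_phi_congr 2 g (u' := of (cInf, b) - of (cInf, a)) ?_]
  · rw [map_sub]
  · rw [map_sub, delta1_of, delta1_of, delta1_of]
    abel

lemma vb_inf (x : Cusp) : vb (x, cInf) = 0 := by
  have := vert_eval x cInf cInf
  rw [sub_self] at this
  exact this

lemma hb_inf (y : Cusp) : hb (cInf, y) = 0 := by
  have := horiz_eval y cInf cInf
  rw [sub_self] at this
  exact this

lemma diag_eval (γ1 γ2 : PSL2Z) :
    piQ (of ((((mobius γ1 cInf, mobius γ2 cInf) : P2),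
        ((mobius γ1 cZero, mobius γ2 cZero) : P2)) : P2 × P2)) =
      vb (mobius γ1 cZero, mobius γ2 cZero) - vb (mobius γ1 cZero, mobius γ2 cInf) +
        (hb (mobius γ1 cZero, mobius γ2 cInf) - hb (mobius γ1 cInf, mobius γ2 cInf)) := by
  have h := piQ_bT2 (γ1, γ2)
  rw [bT2] at h
  have e1 : act2pt (γ1, γ2) (cZero, cInf) = (mobius γ1 cZero, mobius γ2 cInf) := rfl
  have e2 : act2pt (γ1, γ2) (cZero, cZero) = (mobius γ1 cZero, mobius γ2 cZero) := rfl
  have e3 : act2pt (γ1, γ2) (cInf, cInf) = (mobius γ1 cInf, mobius γ2 cInf) := rfl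
  rw [e1, e2, e3, map_add, map_sub] at h
  rw [vert_eval, horiz_eval] at h
  have h2 : piQ (of ((((mobius γ1 cInf, mobius γ2 cInf) : P2),
        ((mobius γ1 cZero, mobius γ2 cZero) : P2)) : P2 × P2)) -
      (vb (mobius γ1 cZero, mobius γ2 cZero) - vb (mobius γ1 cZero, mobius γ2 cInf) +
        (hb (mobius γ1 cZero, mobius γ2 cInf) - hb (mobius γ1 cInf, mobius γ2 cInf))) =
      -(vb (mobius γ1 cZero, mobius γ2 cZero) - vb (mobius γ1 cZero, mobius γ2 cInf) -
        piQ (of ((((mobius γ1 cInf, mobius γ2 cInf) : P2),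
          ((mobius γ1 cZero, mobius γ2 cZero) : P2)) : P2 × P2)) +
        (hb (mobius γ1 cZero, mobius γ2 cInf) - hb (mobius γ1 cInf, mobius γ2 cInf))) := by
    abel
  rw [← sub_eq_zero, h2, h, neg_zero]
lemma mobius_mul_pS_inf (γ : PSL2Z) : mobius (γ * pS) cInf = mobius γ cZero := by
  rw [mobius_mul, mobius_pS_inf]

lemma mobius_mul_pS_zero (γ : PSL2Z) : mobius (γ * pS) cZero = mobius γ cInf := by
  rw [mobius_mul, mobius_pS_zero]

lemma diag_phi1 (γ1 γ2 : PSL2Z) :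
    phi 1 (γ2 * γ1⁻¹) (of ((mobius γ1 cInf, mobius γ1 cZero) : Cusp × Cusp)) =
    of (((mobius γ1 cInf, mobius γ2 cInf), (mobius γ1 cZero, mobius γ2 cZero)) : P2 × P2) := by
  rw [phi1_of, mobius_inv_cancel, mobius_inv_cancel]

lemma rect_rel (γ γ' : PSL2Z) :
    (vb (mobius γ cZero, mobius γ' cZero) - hb (mobius γ cZero, mobius γ' cZero))
    - (vb (mobius γ cZero, mobius γ' cInf) - hb (mobius γ cZero, mobius γ' cInf))
    + ((vb (mobius γ cInf, mobius γ' cInf) - hb (mobius γ cInf, mobius γ' cInf))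
    - (vb (mobius γ cInf, mobius γ' cZero) - hb (mobius γ cInf, mobius γ' cZero))) = 0 := by
  set g := γ' * γ⁻¹ with hgdef
  have hcomp : (γ' * pS) * (γ * pS)⁻¹ = g := by
    rw [hgdef, mul_inv_rev, ← mul_assoc, mul_assoc γ' pS pS⁻¹, mul_inv_cancel, mul_one]
  have hA : of (((mobius γ cInf, mobius γ' cInf), (mobius γ cZero, mobius γ' cZero)) : P2 × P2)
      = phi 1 g (of ((mobius γ cInf, mobius γ cZero) : Cusp × Cusp)) := (diag_phi1 γ γ').symm
  have hB : of (((mobius γ cZero, mobius γ' cZero), (mobius γ cInf, mobius γ' cInf)) : P2 × P2)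
      = phi 1 g (of ((mobius γ cZero, mobius γ cInf) : Cusp × Cusp)) := by
    have := diag_phi1 (γ * pS) (γ' * pS)
    rw [hcomp, mobius_mul_pS_inf, mobius_mul_pS_inf, mobius_mul_pS_zero,
      mobius_mul_pS_zero] at this
    exact this.symm
  have hsum : piQ (phi 1 g (of ((mobius γ cInf, mobius γ cZero) : Cusp × Cusp) +
      of ((mobius γ cZero, mobius γ cInf) : Cusp × Cusp))) = 0 := by
    refine piQ_phi_zero 1 g ?_
    rw [map_add, delta1_of, delta1_of]
    abel
  rw [map_add] at hsum
  rw [← hA, ← hB] at hsum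
  rw [map_add] at hsum
  have eA := diag_eval γ γ'
  have eB := diag_eval (γ * pS) (γ' * pS)
  rw [mobius_mul_pS_inf, mobius_mul_pS_inf, mobius_mul_pS_zero, mobius_mul_pS_zero] at eB
  rw [eA, eB] at hsum
  rw [← hsum]
  abel

lemma rect_const (x y : Cusp) :
    vb (x, y) - hb (x, y) =
      (vb (cInf, y) - hb (cInf, y)) + ((vb (x, cInf) - hb (x, cInf))
        - (vb (cInf, cInf) - hb (cInf, cInf))) := by
  have step1 : ∀ (γ' : PSL2Z) (x : Cusp),
      (vb (x, mobius γ' cZero) - hb (x, mobius γ' cZero))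
        - (vb (x, mobius γ' cInf) - hb (x, mobius γ' cInf)) =
      (vb (cInf, mobius γ' cZero) - hb (cInf, mobius γ' cZero))
        - (vb (cInf, mobius γ' cInf) - hb (cInf, mobius γ' cInf)) := by
    intro γ' x
    refine manin_const (fun x => (vb (x, mobius γ' cZero) - hb (x, mobius γ' cZero))
        - (vb (x, mobius γ' cInf) - hb (x, mobius γ' cInf))) ?_ x
    intro γ
    beta_reduce
    rw [← sub_eq_zero, ← rect_rel γ γ']
    abel
  have step2 : (vb (x, y) - hb (x, y)) - (vb (cInf, y) - hb (cInf, y)) =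
      (vb (x, cInf) - hb (x, cInf)) - (vb (cInf, cInf) - hb (cInf, cInf)) := by
    refine manin_const (fun y => (vb (x, y) - hb (x, y)) - (vb (cInf, y) - hb (cInf, y))) ?_ y
    intro γ'
    beta_reduce
    have h1 := step1 γ' x
    rw [← sub_eq_zero] at h1 ⊢
    rw [← h1]
    abel
  rw [← sub_eq_zero, ← step2]
  abel

lemma R3 (x y : Cusp) : vb (x, y) = hb (x, y) + vb (cInf, y) - hb (x, cInf) := by
  have h := rect_const x y
  rw [hb_inf, vb_inf, hb_inf, vb_inf] at h
  rw [← sub_eq_zero] at h ⊢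
  rw [← h]
  abel
lemma rearrange {M : Type*} [AddCommGroup M] {A B C D : M} (h : A = B)
    (hh : C - D = A - B) : C = D := by
  rw [h, sub_self] at hh
  rwa [sub_eq_zero] at hh

lemma phi1_eval (g : PSL2Z) (a b : Cusp) :
    piQ (phi 1 g (of ((a, b) : Cusp × Cusp))) =
      (hb (b, mobius g b) + vb (cInf, mobius g b))
        - (hb (a, mobius g a) + vb (cInf, mobius g a)) := by
  have hdiag : ∀ γ : PSL2Z, piQ (phi 1 g (of ((mobius γ cInf, mobius γ cZero) : Cusp × Cusp))) =
      vb (mobius γ cZero, mobius g (mobius γ cZero))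
        - vb (mobius γ cZero, mobius g (mobius γ cInf))
        + (hb (mobius γ cZero, mobius g (mobius γ cInf))
        - hb (mobius γ cInf, mobius g (mobius γ cInf))) := by
    intro γ
    have hmc : (g * γ) * γ⁻¹ = g := mul_inv_cancel_right g γ
    have hd := diag_phi1 γ (g * γ)
    rw [hmc] at hd
    rw [hd, diag_eval γ (g * γ), mobius_mul, mobius_mul]
  have hconst : ∀ c : Cusp,
      piQ (phi 1 g (of ((cInf, c) : Cusp × Cusp))) - (hb (c, mobius g c) + vb (cInf, mobius g c))
        = piQ (phi 1 g (of ((cInf, cInf) : Cusp × Cusp)))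
          - (hb (cInf, mobius g cInf) + vb (cInf, mobius g cInf)) := by
    refine manin_const (fun c => piQ (phi 1 g (of ((cInf, c) : Cusp × Cusp)))
      - (hb (c, mobius g c) + vb (cInf, mobius g c))) ?_
    intro γ
    beta_reduce
    have e1 : piQ (phi 1 g (of ((cInf, mobius γ cZero) : Cusp × Cusp)))
        - piQ (phi 1 g (of ((cInf, mobius γ cInf) : Cusp × Cusp)))
        = piQ (phi 1 g (of ((mobius γ cInf, mobius γ cZero) : Cusp × Cusp))) := by
      rw [← map_sub, ← map_sub]
      refine piQ_phi_congr 1 g ?_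
      rw [map_sub, delta1_of, delta1_of, delta1_of]
      abel
    rw [hdiag γ] at e1
    rw [R3 (mobius γ cZero) (mobius g (mobius γ cZero)),
      R3 (mobius γ cZero) (mobius g (mobius γ cInf))] at e1
    refine rearrange e1 ?_
    abel
  have hzero : piQ (phi 1 g (of ((cInf, cInf) : Cusp × Cusp))) = 0 := by
    refine piQ_phi_zero 1 g ?_
    rw [delta1_of, sub_self]
  have hsplit : piQ (phi 1 g (of ((a, b) : Cusp × Cusp)))
      = piQ (phi 1 g (of ((cInf, b) : Cusp × Cusp)))
        - piQ (phi 1 g (of ((cInf, a) : Cusp × Cusp))) := by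
    rw [← map_sub, ← map_sub]
    refine piQ_phi_congr 1 g ?_
    rw [map_sub, delta1_of, delta1_of, delta1_of]
    abel
  have key : ∀ c : Cusp, piQ (phi 1 g (of ((cInf, c) : Cusp × Cusp)))
      = (hb (c, mobius g c) + vb (cInf, mobius g c))
        - (hb (cInf, mobius g cInf) + vb (cInf, mobius g cInf)) := by
    intro c
    have hc := hconst c
    rw [hzero] at hc
    refine rearrange hc ?_
    abel
  rw [hsplit, key a, key b]
  abel
/-- The comparison map used to evaluate transverse chains from their boundary. -/
noncomputable def Psi : FreeAbelianGroup P2 →+ FreeAbelianGroup (P2 × P2) ⧸ Qsub :=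
  FreeAbelianGroup.lift fun p => hb p + vb (cInf, p.2)

lemma Psi_of (p : P2) : Psi (of p) = hb p + vb (cInf, p.2) := lift_apply_of _ _

lemma piQ_eq_Psi_on_phi (j : Fin 3) (g : PSL2Z) (w : FreeAbelianGroup (Cusp × Cusp)) :
    piQ (phi j g w) = Psi (delta2 (phi j g w)) := by
  have hext : piQ.comp (phi j g) = (Psi.comp delta2).comp (phi j g) := by
    apply FreeAbelianGroup.lift_ext
    rintro ⟨a, b⟩
    show piQ (phi j g (of (a,b))) = Psi (delta2 (phi j g (of (a,b))))
    fin_cases j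
    · show piQ (phi 0 g (of (a,b))) = Psi (delta2 (phi 0 g (of (a,b))))
      rw [phi0_of, delta2_of, map_sub, Psi_of, Psi_of, vert_eval,
        R3 (mobius g cInf) b, R3 (mobius g cInf) a]
      abel
    · show piQ (phi 1 g (of (a,b))) = Psi (delta2 (phi 1 g (of (a,b))))
      rw [phi1_eval, phi1_of, delta2_of, map_sub, Psi_of, Psi_of]
    · show piQ (phi 2 g (of (a,b))) = Psi (delta2 (phi 2 g (of (a,b))))
      rw [phi2_of, delta2_of, map_sub, Psi_of, Psi_of, horiz_eval]
      abel
  exact DFunLike.congr_fun hext w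

lemma closed_transverse_mem_Qsub {c : FreeAbelianGroup (P2 × P2)}
    (hT : c ∈ Tsub) (hK : delta2 c = 0) : c ∈ Qsub := by
  have hker : Tsub ≤ (piQ - Psi.comp delta2).ker := by
    refine iSup_le fun j => iSup_le fun g => ?_
    rintro x ⟨w, rfl⟩
    show piQ (phi j g w) - Psi (delta2 (phi j g w)) = 0
    rw [piQ_eq_Psi_on_phi, sub_self]
  have h0 : piQ c - Psi (delta2 c) = 0 := hker hT
  rw [hK, map_zero, sub_zero] at h0
  exact (QuotientAddGroup.eq_zero_iff c).mp h0
lemma bT2_mem_Tsub (γ : PSL2Z × PSL2Z) : bT2 γ ∈ Tsub := by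
  obtain ⟨γ1, γ2⟩ := γ
  have e1 : (of ((act2pt (γ1, γ2) (cZero, cInf), act2pt (γ1, γ2) (cZero, cZero)) : P2 × P2))
      = phi 0 (γ1 * pS) (of ((mobius γ2 cInf, mobius γ2 cZero) : Cusp × Cusp)) := by
    rw [phi0_of, mobius_mul_pS_inf]
    rfl
  have e2 : (of ((act2pt (γ1, γ2) (cInf, cInf), act2pt (γ1, γ2) (cZero, cZero)) : P2 × P2))
      = phi 1 (γ2 * γ1⁻¹) (of ((mobius γ1 cInf, mobius γ1 cZero) : Cusp × Cusp)) := by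
    rw [diag_phi1]
    rfl
  have e3 : (of ((act2pt (γ1, γ2) (cInf, cInf), act2pt (γ1, γ2) (cZero, cInf)) : P2 × P2))
      = phi 2 (γ2 * pS) (of ((mobius γ1 cInf, mobius γ1 cZero) : Cusp × Cusp)) := by
    rw [phi2_of, mobius_mul_pS_zero]
    rfl
  rw [bT2, e1, e2, e3]
  exact add_mem (sub_mem (phi_mem_Tsub 0 _ _) (phi_mem_Tsub 1 _ _)) (phi_mem_Tsub 2 _ _)

lemma Bsub_le_Tsub : Bsub ≤ Tsub := by
  rw [Bsub, AddSubgroup.closure_le]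
  rintro x ⟨γ, rfl⟩
  exact bT2_mem_Tsub γ

lemma Bsub_le_Ksub : Bsub ≤ Ksub := by
  rw [Bsub, AddSubgroup.closure_le]
  rintro x ⟨γ, rfl⟩
  exact delta2_bT2 γ

lemma actT2_add (g g' : MonoidAlgebra ℤ (PSL2Z × PSL2Z)) :
    actT2 (g + g') = actT2 g + actT2 g' := by
  unfold actT2
  rw [MonoidAlgebra.coeff_add]
  apply Finsupp.sum_add_index'
  · intro γ; rw [zero_smul]
  · intro γ n m; rw [add_smul]

lemma actT2_zero : actT2 (0 : MonoidAlgebra ℤ (PSL2Z × PSL2Z)) = 0 := by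
  unfold actT2
  exact Finsupp.sum_zero_index

lemma actT2_neg (g : MonoidAlgebra ℤ (PSL2Z × PSL2Z)) : actT2 (-g) = -actT2 g := by
  have h : actT2 (-g) + actT2 g = 0 := by
    rw [← actT2_add, neg_add_cancel, actT2_zero]
  exact eq_neg_of_add_eq_zero_left h

lemma actT2_single (γ : PSL2Z × PSL2Z) :
    actT2 (MonoidAlgebra.single γ (1:ℤ) : MonoidAlgebra ℤ (PSL2Z × PSL2Z)) = bT2 γ := by
  unfold actT2
  rw [MonoidAlgebra.coeff_single, Finsupp.sum_single_index (by rw [zero_smul])]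
  exact one_smul ℤ (bT2 γ)

lemma exists_actT2 {b : FreeAbelianGroup (P2 × P2)} (hb : b ∈ Bsub) :
    ∃ g : MonoidAlgebra ℤ (PSL2Z × PSL2Z), actT2 g = b := by
  refine AddSubgroup.closure_induction ?_ ?_ ?_ ?_ hb
  · rintro x ⟨γ, rfl⟩
    exact ⟨MonoidAlgebra.single γ 1, actT2_single γ⟩
  · exact ⟨0, actT2_zero⟩
  · rintro x y - - ⟨g, rfl⟩ ⟨g', rfl⟩
    exact ⟨g + g', actT2_add g g'⟩
  · rintro x - ⟨g, rfl⟩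
    exact ⟨-g, actT2_neg g⟩

lemma actT2_mem_Tsub (g : MonoidAlgebra ℤ (PSL2Z × PSL2Z)) : actT2 g ∈ Tsub := by
  unfold actT2
  refine AddSubgroup.sum_mem _ fun γ _ => ?_
  exact zsmul_mem (bT2_mem_Tsub γ) _

/-- The image of `Θ2 : ℤ[Γ²] → H_1(P_2)` is exactly the set of classes of closed transverse
chains, i.e. of elements of `ℤ[P_2²]⁰` lying in `Σ_{j,g} φ_j^g(ℤ[ℙ¹(ℚ)²])`. -/
theorem range_Theta2_eq_closed_transverse_classes :
    Set.range Theta2 =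
      {x : H1P2 | ∃ (c : FreeAbelianGroup (P2 × P2)) (hc : c ∈ Ksub),
        c ∈ Tsub ∧ x = QuotientAddGroup.mk (⟨c, hc⟩ : Ksub)} := by
  ext x
  constructor
  · rintro ⟨g, rfl⟩
    exact ⟨actT2 g, actT2_mem_Ksub g, actT2_mem_Tsub g, rfl⟩
  · rintro ⟨c, hc, hcT, rfl⟩
    have hQ : c ∈ Qsub := closed_transverse_mem_Qsub hcT hc
    rw [Qsub] at hQ
    obtain ⟨b, hbB, n, hnN, hbn⟩ := AddSubgroup.mem_sup.mp hQ
    obtain ⟨g, hg⟩ := exists_actT2 hbB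
    refine ⟨g, ?_⟩
    show QuotientAddGroup.mk (⟨actT2 g, actT2_mem_Ksub g⟩ : Ksub)
      = QuotientAddGroup.mk (⟨c, hc⟩ : Ksub)
    rw [QuotientAddGroup.eq]
    rw [AddSubgroup.mem_addSubgroupOf]
    show -actT2 g + c ∈ Nsub
    rw [hg]
    have h2 : -b + c = n := by rw [← hbn]; abel
    rw [h2]
    exact hnN
end

section
/- Let g = Σ λ_{α,β} (α,β) ∈ ℤ[Γ²] (a finite ℤ-linear combination of pairs). Then g belongs to the left ideal of ℤ[Γ²] generated by (1+S,1), (1+U+U²,1) and (1,1−T) if and only if for every left coset c = γ·⟨T⟩ of the cyclic subgroup ⟨T⟩ = Γ_∞ in Γ, the element Σ_{β ∈ c} λ_{α,β} α of ℤ[Γ] belongs to the left ideal of ℤ[Γ] generated by 1+S and 1+U+U². -/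
open MvPolynomial

attribute [local instance] Classical.propDecidable

namespace ProofAux

abbrev R1 := MonoidAlgebra ℤ PSL2Z
abbrev R2 := MonoidAlgebra ℤ (PSL2Z × PSL2Z)

noncomputable def genI : Set R1 :=
  {(1 : R1) + MonoidAlgebra.of ℤ PSL2Z pS,
   (1 : R1) + MonoidAlgebra.of ℤ PSL2Z pU + MonoidAlgebra.of ℤ PSL2Z (pU ^ 2)}

noncomputable def genJ : Set R2 :=
  {(1 : R2) + MonoidAlgebra.of ℤ (PSL2Z × PSL2Z) (pS, 1),
   (1 : R2) + MonoidAlgebra.of ℤ (PSL2Z × PSL2Z) (pU, 1) +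
     MonoidAlgebra.of ℤ (PSL2Z × PSL2Z) (pU ^ 2, 1),
   (1 : R2) - MonoidAlgebra.of ℤ (PSL2Z × PSL2Z) (1, pT)}

noncomputable def piFun (γ : PSL2Z) (g : R2) : R1 :=
  Finsupp.sum g.coeff fun p n =>
    if γ⁻¹ * p.2 ∈ Subgroup.zpowers pT then (MonoidAlgebra.single p.1 n : R1) else 0

noncomputable def piHom (γ : PSL2Z) : R2 →+ R1 where
  toFun := piFun γ
  map_zero' := by unfold piFun; exact Finsupp.sum_zero_index
  map_add' x y := by
    show piFun γ (x + y) = piFun γ x + piFun γ y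
    unfold piFun
    rw [MonoidAlgebra.coeff_add]
    apply Finsupp.sum_add_index'
    · intro p; simp
    · intro p b₁ b₂; split <;> simp [Finsupp.single_add]

lemma piHom_apply (γ : PSL2Z) (g : R2) : piHom γ g = Finsupp.sum g.coeff fun p n =>
    if γ⁻¹ * p.2 ∈ Subgroup.zpowers pT then (MonoidAlgebra.single p.1 n : R1) else 0 := rfl

lemma piHom_single (γ : PSL2Z) (p : PSL2Z × PSL2Z) (c : ℤ) :
    piHom γ (MonoidAlgebra.single p c) =
      if γ⁻¹ * p.2 ∈ Subgroup.zpowers pT then (MonoidAlgebra.single p.1 c : R1) else 0 := by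
  rw [piHom_apply, MonoidAlgebra.coeff_single, Finsupp.sum_single_index]
  split <;> simp

lemma piHom_single_mul (γ α β : PSL2Z) (c : ℤ) (x : R2) :
    piHom γ (MonoidAlgebra.single (α, β) c * x) =
      MonoidAlgebra.single α c * piHom (β⁻¹ * γ) x := by
  induction x using MonoidAlgebra.induction_linear with
  | zero => simp
  | add f g hf hg => rw [mul_add, map_add, hf, hg, map_add, mul_add]
  | single q d =>
      rw [show (MonoidAlgebra.single (α, β) c : R2) * MonoidAlgebra.single q d
            = MonoidAlgebra.single ((α, β) * q) (c * d) from MonoidAlgebra.single_mul_single ..,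
        piHom_single, piHom_single]
      have hcond : (γ⁻¹ * ((α, β) * q).2 ∈ Subgroup.zpowers pT) ↔
          ((β⁻¹ * γ)⁻¹ * q.2 ∈ Subgroup.zpowers pT) := by
        simp [mul_assoc]
      split
      · rw [if_pos (hcond.mp (by assumption))]
        exact (MonoidAlgebra.single_mul_single ..).symm
      · rw [if_neg (fun h => ‹¬_› (hcond.mpr h)), mul_zero]

noncomputable def iotaHom (γ : PSL2Z) : R1 →+ R2 :=
  { toFun := MonoidAlgebra.mapDomain (fun α => (α, γ))
    map_zero' := MonoidAlgebra.mapDomain_zero _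
    map_add' := MonoidAlgebra.mapDomain_add _ }

lemma iotaHom_single (γ α : PSL2Z) (c : ℤ) :
    iotaHom γ (MonoidAlgebra.single α c) = MonoidAlgebra.single (α, γ) c :=
  MonoidAlgebra.mapDomain_single

lemma iotaHom_single_mul (γ α : PSL2Z) (c : ℤ) (y : R1) :
    iotaHom γ (MonoidAlgebra.single α c * y) =
      MonoidAlgebra.single (α, (1 : PSL2Z)) c * iotaHom γ y := by
  induction y using MonoidAlgebra.induction_linear with
  | zero => simp
  | add f g hf hg => rw [mul_add, map_add, hf, hg, map_add, mul_add]
  | single q d =>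
      rw [show (MonoidAlgebra.single α c : R1) * MonoidAlgebra.single q d
            = MonoidAlgebra.single (α * q) (c * d) from MonoidAlgebra.single_mul_single ..,
        iotaHom_single, iotaHom_single, MonoidAlgebra.single_mul_single]
      simp

lemma genI_mem1 : (1 : R1) + MonoidAlgebra.of ℤ PSL2Z pS ∈ Ideal.span genI :=
  Ideal.subset_span (Set.mem_insert _ _)

lemma genI_mem2 : (1 : R1) + MonoidAlgebra.of ℤ PSL2Z pU + MonoidAlgebra.of ℤ PSL2Z (pU ^ 2) ∈
    Ideal.span genI :=
  Ideal.subset_span (Set.mem_insert_of_mem _ rfl)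

lemma iotaHom_mem (γ : PSL2Z) {y : R1} (hy : y ∈ Ideal.span genI) :
    iotaHom γ y ∈ Ideal.span genJ := by
  induction hy using Submodule.span_induction with
  | mem x hx =>
      rcases hx with h | h
      · subst h
        have heq : iotaHom γ ((1 : R1) + MonoidAlgebra.of ℤ PSL2Z pS)
            = MonoidAlgebra.single ((1 : PSL2Z), γ) 1 *
              ((1 : R2) + MonoidAlgebra.of ℤ (PSL2Z × PSL2Z) (pS, 1)) := by
          simp [MonoidAlgebra.one_def, MonoidAlgebra.of_apply, mul_add,
            MonoidAlgebra.single_mul_single, iotaHom_single]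
        rw [heq]
        exact Ideal.mul_mem_left _ _ (Ideal.subset_span (by left; rfl))
      · rw [Set.mem_singleton_iff] at h
        subst h
        have heq : iotaHom γ ((1 : R1) + MonoidAlgebra.of ℤ PSL2Z pU +
              MonoidAlgebra.of ℤ PSL2Z (pU ^ 2))
            = MonoidAlgebra.single ((1 : PSL2Z), γ) 1 *
              ((1 : R2) + MonoidAlgebra.of ℤ (PSL2Z × PSL2Z) (pU, 1) +
                MonoidAlgebra.of ℤ (PSL2Z × PSL2Z) (pU ^ 2, 1)) := by
          simp [MonoidAlgebra.one_def, MonoidAlgebra.of_apply, mul_add,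
            MonoidAlgebra.single_mul_single, iotaHom_single]
        rw [heq]
        exact Ideal.mul_mem_left _ _ (Ideal.subset_span (by right; left; rfl))
  | zero => simp
  | add x y _ _ hx hy => rw [map_add]; exact add_mem hx hy
  | smul a x _ hx =>
      rw [smul_eq_mul]
      induction a using MonoidAlgebra.induction_linear with
      | zero => simp
      | add f g hf hg => rw [add_mul, map_add]; exact add_mem hf hg
      | single q d =>
          rw [iotaHom_single_mul]
          exact Ideal.mul_mem_left _ _ hx

lemma one_sub_pT_zpow_mem (k : ℤ) :
    (1 : R2) - MonoidAlgebra.single ((1 : PSL2Z), pT ^ k) 1 ∈ Ideal.span genJ := by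
  have hgen : (1 : R2) - MonoidAlgebra.single ((1 : PSL2Z), pT) 1 ∈ Ideal.span genJ := by
    apply Ideal.subset_span
    right; right
    rw [Set.mem_singleton_iff, MonoidAlgebra.of_apply]
  induction k using Int.induction_on with
  | zero => simp [Prod.mk_one_one, ← MonoidAlgebra.one_def (M := PSL2Z × PSL2Z)]
  | succ n ih =>
      have heq : (1 : R2) - MonoidAlgebra.single ((1 : PSL2Z), pT ^ ((n : ℤ) + 1)) 1
          = ((1 : R2) - MonoidAlgebra.single ((1 : PSL2Z), pT ^ (n : ℤ)) 1) +
            MonoidAlgebra.single ((1 : PSL2Z), pT ^ (n : ℤ)) 1 *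
              ((1 : R2) - MonoidAlgebra.single ((1 : PSL2Z), pT) 1) := by
        rw [mul_sub, mul_one, MonoidAlgebra.single_mul_single,
          show ((1 : PSL2Z), pT ^ (n : ℤ)) * (1, pT) = (1, pT ^ ((n : ℤ) + 1)) by
            rw [Prod.mk_mul_mk, mul_one, ← zpow_add_one], one_mul]
        abel
      rw [heq]
      exact add_mem ih (Ideal.mul_mem_left _ _ hgen)
  | pred n ih =>
      have heq : (1 : R2) - MonoidAlgebra.single ((1 : PSL2Z), pT ^ (-(n : ℤ) - 1)) 1
          = ((1 : R2) - MonoidAlgebra.single ((1 : PSL2Z), pT ^ (-(n : ℤ))) 1) -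
            MonoidAlgebra.single ((1 : PSL2Z), pT ^ (-(n : ℤ) - 1)) 1 *
              ((1 : R2) - MonoidAlgebra.single ((1 : PSL2Z), pT) 1) := by
        rw [mul_sub, mul_one, MonoidAlgebra.single_mul_single,
          show ((1 : PSL2Z), pT ^ (-(n : ℤ) - 1)) * (1, pT) = (1, pT ^ (-(n : ℤ))) by
            rw [Prod.mk_mul_mk, mul_one, ← zpow_add_one,
              show (-(n : ℤ) - 1) + 1 = -(n : ℤ) by ring], one_mul]
        abel
      rw [heq]
      exact sub_mem ih (Ideal.mul_mem_left _ _ hgen)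

lemma sub_single_mem (α β δ : PSL2Z) (c : ℤ) (h : β⁻¹ * δ ∈ Subgroup.zpowers pT) :
    (MonoidAlgebra.single (α, β) c : R2) - MonoidAlgebra.single (α, δ) c ∈ Ideal.span genJ := by
  obtain ⟨k, hk⟩ := h
  have hk' : pT ^ k = β⁻¹ * δ := hk
  have hδ : δ = β * pT ^ k := by rw [hk', mul_inv_cancel_left]
  have heq : (MonoidAlgebra.single (α, β) c : R2) - MonoidAlgebra.single (α, δ) c
      = MonoidAlgebra.single (α, β) c *
          ((1 : R2) - MonoidAlgebra.single ((1 : PSL2Z), pT ^ k) 1) := by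
    rw [mul_sub, mul_one, MonoidAlgebra.single_mul_single, hδ]
    simp
  rw [heq]
  exact Ideal.mul_mem_left _ _ (one_sub_pT_zpow_mem k)

noncomputable def rho (β : PSL2Z) : PSL2Z :=
  (QuotientGroup.mk β : PSL2Z ⧸ Subgroup.zpowers pT).out

lemma rho_spec (β : PSL2Z) : β⁻¹ * rho β ∈ Subgroup.zpowers pT :=
  QuotientGroup.eq.mp (QuotientGroup.out_eq' (QuotientGroup.mk β)).symm

lemma rho_rho (β : PSL2Z) : rho (rho β) = rho β := by
  unfold rho
  rw [QuotientGroup.out_eq']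

lemma rho_eq_iff {γ β : PSL2Z} (hγ : rho γ = γ) :
    (γ⁻¹ * β ∈ Subgroup.zpowers pT) ↔ rho β = γ := by
  constructor
  · intro h
    have h2 : (QuotientGroup.mk γ : PSL2Z ⧸ Subgroup.zpowers pT) = QuotientGroup.mk β :=
      QuotientGroup.eq.mpr h
    rw [← hγ]
    unfold rho
    rw [← h2]
  · intro h
    apply QuotientGroup.eq.mp
    show (QuotientGroup.mk γ : PSL2Z ⧸ Subgroup.zpowers pT) = QuotientGroup.mk β
    rw [← h]
    exact QuotientGroup.out_eq' _

end ProofAux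


/-- `g = Σ λ_{α,β}(α,β)` lies in the left ideal of `ℤ[Γ²]` generated by `(1+S,1)`,
`(1+U+U²,1)` and `(1,1-T)` iff for every left coset `γ⟨T⟩` of `⟨T⟩ = Γ_∞`, the element
`Σ_{β ∈ γ⟨T⟩} λ_{α,β} α` of `ℤ[Γ]` lies in the left ideal generated by `1+S` and `1+U+U²`. -/
theorem mem_IH_iff_coset_sums (g : MonoidAlgebra ℤ (PSL2Z × PSL2Z)) :
    g ∈ Ideal.span ({(1 : MonoidAlgebra ℤ (PSL2Z × PSL2Z)) +
          MonoidAlgebra.of ℤ (PSL2Z × PSL2Z) (pS, 1),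
        (1 : MonoidAlgebra ℤ (PSL2Z × PSL2Z)) + MonoidAlgebra.of ℤ (PSL2Z × PSL2Z) (pU, 1) +
          MonoidAlgebra.of ℤ (PSL2Z × PSL2Z) (pU ^ 2, 1),
        (1 : MonoidAlgebra ℤ (PSL2Z × PSL2Z)) - MonoidAlgebra.of ℤ (PSL2Z × PSL2Z) (1, pT)} :
      Set (MonoidAlgebra ℤ (PSL2Z × PSL2Z))) ↔
    ∀ γ : PSL2Z,
      (Finsupp.sum g.coeff fun p n =>
          if γ⁻¹ * p.2 ∈ Subgroup.zpowers pT then (MonoidAlgebra.single p.1 n : MonoidAlgebra ℤ PSL2Z)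
          else 0) ∈
        Ideal.span ({(1 : MonoidAlgebra ℤ PSL2Z) + MonoidAlgebra.of ℤ PSL2Z pS,
            (1 : MonoidAlgebra ℤ PSL2Z) + MonoidAlgebra.of ℤ PSL2Z pU +
              MonoidAlgebra.of ℤ PSL2Z (pU ^ 2)} : Set (MonoidAlgebra ℤ PSL2Z)) := by
  constructor
  · intro hg γ
    have H : ∀ δ : PSL2Z, ProofAux.piHom δ g ∈ Ideal.span ProofAux.genI := by
      induction hg using Submodule.span_induction with
      | mem x hx =>
          intro δ
          rcases hx with h | h | h
          · subst h
            rw [MonoidAlgebra.one_def, MonoidAlgebra.of_apply, map_add,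
              ProofAux.piHom_single, ProofAux.piHom_single]
            simp only [Prod.snd_one, Prod.fst_one, mul_one]
            by_cases hc : δ⁻¹ ∈ Subgroup.zpowers pT
            · rw [if_pos hc, if_pos hc]
              simpa [MonoidAlgebra.one_def, MonoidAlgebra.of_apply] using ProofAux.genI_mem1
            · rw [if_neg hc, if_neg hc, add_zero]
              exact zero_mem _
          · subst h
            rw [MonoidAlgebra.one_def, MonoidAlgebra.of_apply, MonoidAlgebra.of_apply,
              map_add, map_add, ProofAux.piHom_single, ProofAux.piHom_single,
              ProofAux.piHom_single]
            simp only [Prod.snd_one, Prod.fst_one, mul_one]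
            by_cases hc : δ⁻¹ ∈ Subgroup.zpowers pT
            · rw [if_pos hc, if_pos hc, if_pos hc]
              simpa [MonoidAlgebra.one_def, MonoidAlgebra.of_apply] using ProofAux.genI_mem2
            · rw [if_neg hc, if_neg hc, if_neg hc, add_zero, add_zero]
              exact zero_mem _
          · rw [Set.mem_singleton_iff] at h
            subst h
            rw [MonoidAlgebra.one_def, MonoidAlgebra.of_apply, map_sub,
              ProofAux.piHom_single, ProofAux.piHom_single]
            simp only [Prod.snd_one, Prod.fst_one, mul_one]
            have hcond : (δ⁻¹ * pT ∈ Subgroup.zpowers pT) ↔ δ⁻¹ ∈ Subgroup.zpowers pT :=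
              mul_mem_cancel_right (Subgroup.mem_zpowers pT)
            by_cases hc : δ⁻¹ ∈ Subgroup.zpowers pT
            · rw [if_pos hc, if_pos (hcond.mpr hc), sub_self]
              exact zero_mem _
            · rw [if_neg hc, if_neg (fun h => hc (hcond.mp h)), sub_zero]
              exact zero_mem _
      | zero => intro δ; simp
      | add x y _ _ hx hy => intro δ; rw [map_add]; exact add_mem (hx δ) (hy δ)
      | smul a x _ ih =>
          intro δ
          rw [smul_eq_mul]
          induction a using MonoidAlgebra.induction_linear with
          | zero => simp
          | add f g' hf hg' => rw [add_mul, map_add]; exact add_mem hf hg'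
          | single q d =>
              obtain ⟨α, β⟩ := q
              rw [ProofAux.piHom_single_mul]
              exact Ideal.mul_mem_left _ _ (ih _)
    exact H γ
  · intro H
    have H' : ∀ γ, ProofAux.piHom γ g ∈ Ideal.span ProofAux.genI := fun γ => H γ
    set Ψ : MonoidAlgebra ℤ (PSL2Z × PSL2Z) := Finsupp.sum g.coeff fun p c =>
      (MonoidAlgebra.single (p.1, ProofAux.rho p.2) c : MonoidAlgebra ℤ (PSL2Z × PSL2Z)) with hΨ
    set Sf : Finset PSL2Z := g.coeff.support.image (fun p => ProofAux.rho p.2) with hSf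
    have key2 : Ψ ∈ Ideal.span ProofAux.genJ := by
      have hrw : Ψ = ∑ γ ∈ Sf, ProofAux.iotaHom γ (ProofAux.piHom γ g) := by
        have hterm : ∀ γ ∈ Sf, ProofAux.iotaHom γ (ProofAux.piHom γ g)
            = ∑ p ∈ g.coeff.support, if γ⁻¹ * p.2 ∈ Subgroup.zpowers pT then
                (MonoidAlgebra.single (p.1, γ) (g.coeff p) : MonoidAlgebra ℤ (PSL2Z × PSL2Z)) else 0 := by
          intro γ _
          rw [ProofAux.piHom_apply, Finsupp.sum, map_sum]
          refine Finset.sum_congr rfl fun p hp => ?_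
          split
          · exact ProofAux.iotaHom_single _ _ _
          · exact map_zero _
        rw [Finset.sum_congr rfl hterm, Finset.sum_comm, hΨ, Finsupp.sum]
        refine Finset.sum_congr rfl fun p hp => ?_
        have h1 : ∀ γ ∈ Sf, ((γ⁻¹ * p.2 ∈ Subgroup.zpowers pT) ↔ γ = ProofAux.rho p.2) := by
          intro γ hγ
          obtain ⟨r, _, rfl⟩ := Finset.mem_image.mp hγ
          rw [ProofAux.rho_eq_iff (ProofAux.rho_rho _)]
          exact eq_comm
        rw [Finset.sum_congr rfl (fun γ hγ => if_congr (h1 γ hγ) rfl rfl),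
          Finset.sum_ite_eq' Sf (ProofAux.rho p.2)
            (fun γ => (MonoidAlgebra.single (p.1, γ) (g.coeff p) : MonoidAlgebra ℤ (PSL2Z × PSL2Z))),
          if_pos (Finset.mem_image_of_mem _ hp)]
      rw [hrw]
      exact Submodule.sum_mem _ fun γ _ => ProofAux.iotaHom_mem γ (H' γ)
    have key1 : g - Ψ ∈ Ideal.span ProofAux.genJ := by
      have hsub : g - Ψ = Finsupp.sum g.coeff fun p c =>
          ((MonoidAlgebra.single p c : MonoidAlgebra ℤ (PSL2Z × PSL2Z)) -
            MonoidAlgebra.single (p.1, ProofAux.rho p.2) c) := by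
        rw [Finsupp.sum_sub, MonoidAlgebra.sum_coeff_single, hΨ]
      rw [hsub, Finsupp.sum]
      refine Submodule.sum_mem _ fun p hp => ?_
      exact ProofAux.sub_single_mem p.1 p.2 _ (g.coeff p) (ProofAux.rho_spec p.2)
    have := add_mem key1 key2
    rw [sub_add_cancel] at this
    exact this
end
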